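/- Feasibility under ellipsoidal uncertainty (Theorem 4.1): for every δ_E > 0, the robust feasibility condition "for all ζ ∈ ℝⁿ with ‖ζ‖₂ ≤ δ_E, ((δ_E μ⁽⁰⁾ + Σ_{j=1}^n ζⱼ μ⁽ʲ⁾)ᵀ x)² ≥ τ² δ_E²" holds if and only if there exists λ ≥ 0 such that the matrix A − λ B⁽ᴱ⁾ — i.e. the symmetric (n+1)×(n+1) matrix with (0,0)-entry a₀² − τ² − λ, (j,j)-entry a_j² + λ for 1 ≤ j ≤ n, and (i,j)-entry a_i a_j for i ≠ j — is positive semidefinite. -/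

import Mathlib

open Matrix

noncomputable section

/-- `a j = (μ⁽ʲ⁾)ᵀ x`, the dot product of the `j`-th expected-return vector with `x`. -/
def avec (n : ℕ) (x : Fin n → ℝ) (μ : Fin (n + 1) → Fin n → ℝ) : Fin (n + 1) → ℝ :=
  fun j => μ j ⬝ᵥ x

/-- The symmetric matrix `A = a aᵀ - τ² e₀ e₀ᵀ`. -/
def Amat (n : ℕ) (x : Fin n → ℝ) (τ : ℝ) (μ : Fin (n + 1) → Fin n → ℝ) :
    Matrix (Fin (n + 1)) (Fin (n + 1)) ℝ :=
  Matrix.of fun i j =>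
    avec n x μ i * avec n x μ j - if i = 0 ∧ j = 0 then τ ^ 2 else 0

/-- The matrix `B⁽ᴱ⁾ = diag(1, -1, …, -1)`. -/
def BE (n : ℕ) : Matrix (Fin (n + 1)) (Fin (n + 1)) ℝ :=
  Matrix.diagonal fun i => if i = 0 then 1 else -1

/-- The matrix `B⁽ᴾ⁾ = e₀e₀ᵀ - J`: `(0,0)`-entry `1`, entries `-1` for `i, j ≥ 1`,
zero elsewhere. -/
def BP (n : ℕ) : Matrix (Fin (n + 1)) (Fin (n + 1)) ℝ :=
  Matrix.of fun i j =>
    if i = 0 ∧ j = 0 then 1 else if i ≠ 0 ∧ j ≠ 0 then -1 else 0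

/-- A real matrix is positive semidefinite: `zᵀ M z ≥ 0` for all `z`. -/
def IsPSD {d : ℕ} (M : Matrix (Fin d) (Fin d) ℝ) : Prop :=
  ∀ z : Fin d → ℝ, 0 ≤ z ⬝ᵥ M *ᵥ z

lemma quadform (n : ℕ) (x : Fin n → ℝ) (τ lam : ℝ) (μ : Fin (n + 1) → Fin n → ℝ)
    (z : Fin (n + 1) → ℝ) :
    z ⬝ᵥ (Amat n x τ μ - lam • BE n) *ᵥ z =
      (∑ i, avec n x μ i * z i) ^ 2 - τ ^ 2 * z 0 ^ 2 - lam * z 0 ^ 2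
        + lam * ∑ j : Fin n, z j.succ ^ 2 := by
  set a := avec n x μ with ha
  have hB : z ⬝ᵥ (BE n) *ᵥ z = z 0 ^ 2 - ∑ j : Fin n, z j.succ ^ 2 := by
    have h1 : ∀ j : Fin n,
        z j.succ * ((if (j.succ : Fin (n+1)) = 0 then (1:ℝ) else -1) * z j.succ)
          = -(z j.succ ^ 2) := fun j => by simp [Fin.succ_ne_zero]; ring
    simp only [BE, dotProduct, mulVec_diagonal, Fin.sum_univ_succ, h1]
    simp [Finset.sum_neg_distrib]
    ring
  have hA : z ⬝ᵥ (Amat n x τ μ) *ᵥ z = (∑ i, a i * z i) ^ 2 - τ ^ 2 * z 0 ^ 2 := by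
    simp only [Amat, dotProduct, mulVec, Matrix.of_apply, ← ha]
    have key : ∀ i, (∑ j, (a i * a j - if i = 0 ∧ j = 0 then τ ^ 2 else 0) * z j)
        = a i * (∑ j, a j * z j) - (if i = 0 then τ ^ 2 * z 0 else 0) := by
      intro i
      by_cases hi : i = 0
      · subst hi
        simp only [true_and, if_true]
        have h2 : ∀ j : Fin (n+1), (a 0 * a j - if j = 0 then τ ^ 2 else 0) * z j
            = a 0 * (a j * z j) - (if j = 0 then τ ^ 2 * z j else 0) := fun j => by
          split <;> ring
        rw [Finset.sum_congr rfl fun j _ => h2 j, Finset.sum_sub_distrib, Finset.mul_sum]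
        simp
      · simp only [hi, false_and, if_false, sub_zero, Finset.mul_sum]
        exact Finset.sum_congr rfl fun j _ => by ring
    rw [Finset.sum_congr rfl fun i _ => by rw [key i]]
    have h3 : ∀ i : Fin (n+1), z i * (a i * (∑ j, a j * z j) - (if i = 0 then τ ^ 2 * z 0 else 0))
        = (a i * z i) * (∑ j, a j * z j) - (if i = 0 then τ ^ 2 * z 0 * z 0 else 0) := by
      intro i
      by_cases hi : i = 0
      · subst hi; simp only [eq_self_iff_true, if_true]; ring
      · simp [hi]; ring
    rw [Finset.sum_congr rfl fun i _ => h3 i, Finset.sum_sub_distrib, ← Finset.sum_mul]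
    simp [sq]
    ring
  rw [sub_mulVec, dotProduct_sub, hA, smul_mulVec, dotProduct_smul, hB]
  simp
  ring

lemma dotlem (n : ℕ) (x : Fin n → ℝ) (μ : Fin (n + 1) → Fin n → ℝ) (δE : ℝ) (ζ : Fin n → ℝ) :
    (δE • μ 0 + ∑ j : Fin n, ζ j • μ j.succ) ⬝ᵥ x
      = δE * avec n x μ 0 + ∑ j : Fin n, ζ j * avec n x μ j.succ := by
  simp only [dotProduct, Pi.add_apply, Pi.smul_apply, Finset.sum_apply, smul_eq_mul, avec]
  rw [Finset.sum_congr rfl (fun i _ => by rw [add_mul, Finset.sum_mul] :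
    ∀ i ∈ Finset.univ, (δE * μ 0 i + ∑ j : Fin n, ζ j * μ j.succ i) * x i
      = δE * μ 0 i * x i + ∑ j : Fin n, ζ j * μ j.succ i * x i)]
  rw [Finset.sum_add_distrib]
  congr 1
  · rw [Finset.mul_sum]
    exact Finset.sum_congr rfl fun i _ => by ring
  · rw [Finset.sum_comm]
    exact Finset.sum_congr rfl fun j _ => by
      rw [Finset.mul_sum]
      exact Finset.sum_congr rfl fun i _ => by ring

set_option maxHeartbeats 1000000 in
/-- **Theorem 4.1** (feasibility under ellipsoidal uncertainty): the radius-`δ_E` robust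
feasibility condition holds iff there is `λ ≥ 0` with `A - λ B⁽ᴱ⁾` positive semidefinite. -/
theorem feasibility_ellipsoidal (n : ℕ) (hn : 1 ≤ n) (x : Fin n → ℝ) (τ : ℝ)
    (μ : Fin (n + 1) → Fin n → ℝ) (δE : ℝ) (hδE : 0 < δE) :
    (∀ ζ : Fin n → ℝ, Real.sqrt (∑ j, ζ j ^ 2) ≤ δE →
        τ ^ 2 * δE ^ 2 ≤ ((δE • μ 0 + ∑ j : Fin n, ζ j • μ j.succ) ⬝ᵥ x) ^ 2) ↔
      ∃ lam : ℝ, 0 ≤ lam ∧ IsPSD (Amat n x τ μ - lam • BE n) := by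
  set a := avec n x μ with ha
  set b : Fin n → ℝ := fun j => a j.succ with hb
  set β := Real.sqrt (∑ j, b j ^ 2) with hβ
  have hβ0 : 0 ≤ β := Real.sqrt_nonneg _
  have hβsq : β ^ 2 = ∑ j, b j ^ 2 := Real.sq_sqrt (by positivity)
  constructor
  · intro h
    have hinst : ∀ ζ : Fin n → ℝ, (∑ j, ζ j ^ 2) ≤ δE ^ 2 →
        τ ^ 2 * δE ^ 2 ≤ (δE * a 0 + ∑ j, ζ j * b j) ^ 2 := by
      intro ζ hζ
      have hsq : Real.sqrt (∑ j, ζ j ^ 2) ≤ δE := by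
        calc Real.sqrt (∑ j, ζ j ^ 2) ≤ Real.sqrt (δE ^ 2) := Real.sqrt_le_sqrt hζ
        _ = δE := Real.sqrt_sq hδE.le
      have := h ζ hsq
      rwa [dotlem] at this
    by_cases hτ : τ = 0
    · refine ⟨0, le_refl 0, fun z => ?_⟩
      rw [quadform]
      subst hτ
      simp
      positivity
    · have ht : 0 < |τ| := abs_pos.mpr hτ
      have hδ2 : 0 < δE ^ 2 := by positivity
      have key : β + |τ| ≤ |a 0| := by
        by_cases hβpos : β = 0
        · have h0 := hinst (fun _ => 0) (by simp; positivity)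
          simp at h0
          have h0' : τ ^ 2 ≤ a 0 ^ 2 := by nlinarith
          rw [hβpos, zero_add]
          nlinarith [abs_nonneg (a 0), sq_abs τ, sq_abs (a 0)]
        · have hβp : 0 < β := lt_of_le_of_ne hβ0 (Ne.symm hβpos)
          have hβa : β ≤ |a 0| := by
            by_contra hlt
            push_neg at hlt
            set c := δE * a 0 / β ^ 2 with hc
            have h1 := hinst (fun j => -(c * b j)) ?_
            · have hsum : (∑ j, -(c * b j) * b j) = -(c * β ^ 2) := by
                rw [hβsq, Finset.mul_sum, ← Finset.sum_neg_distrib]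
                exact Finset.sum_congr rfl fun j _ => by ring
              rw [hsum] at h1
              have hval : δE * a 0 + -(c * β ^ 2) = 0 := by
                rw [hc]; field_simp; ring
              rw [hval] at h1
              have hτ2 : 0 < τ ^ 2 := by positivity
              nlinarith [mul_pos hτ2 hδ2]
            · have h5 : ∀ j, (-(c * b j)) ^ 2 = c ^ 2 * b j ^ 2 := fun j => by ring
              rw [Finset.sum_congr rfl fun j _ => h5 j, ← Finset.mul_sum, ← hβsq]
              have ha2 : a 0 ^ 2 < β ^ 2 := by
                nlinarith [abs_nonneg (a 0), sq_abs (a 0)]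
              rw [hc, div_pow, div_mul_eq_mul_div, div_le_iff₀ (by positivity)]
              nlinarith [mul_nonneg (mul_nonneg hδ2.le (sq_nonneg β)) (sub_pos.2 ha2).le]
          have ha0 : a 0 ≠ 0 := by
            intro h0
            rw [h0, abs_zero] at hβa
            exact absurd (le_antisymm hβa hβ0) hβpos
          have haabs : 0 < |a 0| := abs_pos.mpr ha0
          set c := δE * a 0 / (|a 0| * β) with hc
          have h1 := hinst (fun j => -(c * b j)) ?_
          · have hsum : (∑ j, -(c * b j) * b j) = -(c * β ^ 2) := by
              rw [hβsq, Finset.mul_sum, ← Finset.sum_neg_distrib]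
              exact Finset.sum_congr rfl fun j _ => by ring
            rw [hsum] at h1
            have hval : δE * a 0 + -(c * β ^ 2) = δE * (a 0 / |a 0|) * (|a 0| - β) := by
              rw [hc]; field_simp; ring
            rw [hval] at h1
            have hdiv : (a 0 / |a 0|) ^ 2 = 1 := by
              rw [div_pow, sq_abs, div_self (by positivity)]
            have h2 : τ ^ 2 * δE ^ 2 ≤ δE ^ 2 * (|a 0| - β) ^ 2 := by
              calc τ ^ 2 * δE ^ 2 ≤ (δE * (a 0 / |a 0|) * (|a 0| - β)) ^ 2 := h1
              _ = δE ^ 2 * ((a 0 / |a 0|) ^ 2 * (|a 0| - β) ^ 2) := by ring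
              _ = δE ^ 2 * (|a 0| - β) ^ 2 := by rw [hdiv, one_mul]
            have h3 : τ ^ 2 ≤ (|a 0| - β) ^ 2 := by nlinarith
            have h4 : |τ| ≤ |a 0| - β := by
              have := Real.sqrt_le_sqrt h3
              rwa [Real.sqrt_sq_eq_abs, Real.sqrt_sq (by linarith)] at this
            linarith
          · have h5 : ∀ j, (-(c * b j)) ^ 2 = c ^ 2 * b j ^ 2 := fun j => by ring
            rw [Finset.sum_congr rfl fun j _ => h5 j, ← Finset.mul_sum, ← hβsq]
            have hceq : c ^ 2 * β ^ 2 = δE ^ 2 * (a 0 ^ 2 / a 0 ^ 2) := by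
              rw [hc]; field_simp; ring_nf; rw [sq_abs]
            rw [hceq, div_self (by positivity : a 0 ^ 2 ≠ 0), mul_one]
      refine ⟨|τ| * β, by positivity, fun z => ?_⟩
      rw [quadform]
      set u := z 0 with hu
      set p := ∑ j : Fin n, b j * z j.succ with hp
      set S := ∑ j : Fin n, z j.succ ^ 2 with hS
      have hsum : (∑ i, a i * z i) = a 0 * u + p := by
        rw [Fin.sum_univ_succ]
      rw [hsum]
      have hCS : p ^ 2 ≤ β ^ 2 * S := by
        rw [hβsq, hp, hS]
        exact Finset.sum_mul_sq_le_sq_mul_sq Finset.univ b (fun j => z j.succ)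
      have hSnn : 0 ≤ S := by rw [hS]; positivity
      have h1 : (β + |τ|) ^ 2 ≤ a 0 ^ 2 := by
        calc (β + |τ|) ^ 2 ≤ |a 0| ^ 2 := pow_le_pow_left₀ (by positivity) key 2
        _ = a 0 ^ 2 := sq_abs _
      have ht2 : τ ^ 2 = |τ| ^ 2 := (sq_abs τ).symm
      rw [ht2]
      by_cases hβpos : β = 0
      · have h1' : |τ| ^ 2 ≤ a 0 ^ 2 := by rw [hβpos, zero_add] at h1; exact h1
        have hp0 : p = 0 := by
          have h4 : p ^ 2 ≤ 0 := by rw [hβpos] at hCS; nlinarith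
          nlinarith [sq_nonneg p]
        rw [hp0, hβpos]
        simp
        nlinarith [mul_nonneg (sub_nonneg.2 h1') (sq_nonneg u)]
      · have hβp : 0 < β := lt_of_le_of_ne hβ0 (Ne.symm hβpos)
        have e1 := sq_nonneg ((β + |τ|) * p + β * (a 0) * u)
        have e2 : 0 ≤ |τ| * β * (a 0 ^ 2 - (β + |τ|) ^ 2) * u ^ 2 :=
          mul_nonneg (mul_nonneg (mul_nonneg (abs_nonneg τ) hβ0) (sub_nonneg.2 h1))
            (sq_nonneg u)
        have e3 : 0 ≤ |τ| * (β + |τ|) * (β ^ 2 * S - p ^ 2) :=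
          mul_nonneg (mul_nonneg (abs_nonneg τ) (by positivity)) (sub_nonneg.2 hCS)
        have hid : β * (β + |τ|) *
            ((a 0 * u + p) ^ 2 - |τ| ^ 2 * u ^ 2 - |τ| * β * u ^ 2 + |τ| * β * S)
            = ((β + |τ|) * p + β * a 0 * u) ^ 2
              + |τ| * β * (a 0 ^ 2 - (β + |τ|) ^ 2) * u ^ 2
              + |τ| * (β + |τ|) * (β ^ 2 * S - p ^ 2) := by ring
        have hpos : 0 < β * (β + |τ|) := by positivity
        have hQ : β * (β + |τ|) * 0 ≤ β * (β + |τ|) *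
            ((a 0 * u + p) ^ 2 - |τ| ^ 2 * u ^ 2 - |τ| * β * u ^ 2 + |τ| * β * S) := by
          rw [hid]; linarith
        have := (mul_le_mul_iff_right₀ hpos).mp hQ
        linarith
  · rintro ⟨lam, hlam, hpsd⟩ ζ hζ
    have hζnn : 0 ≤ ∑ j, ζ j ^ 2 := by positivity
    have hζ2 : ∑ j, ζ j ^ 2 ≤ δE ^ 2 := by
      have := Real.sq_sqrt hζnn
      nlinarith [Real.sqrt_nonneg (∑ j, ζ j ^ 2)]
    set z : Fin (n + 1) → ℝ := Fin.cases δE ζ with hz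
    have hq := hpsd z
    rw [quadform] at hq
    have h0 : z 0 = δE := rfl
    have hsucc : ∀ j : Fin n, z j.succ = ζ j := fun j => by simp [hz]
    have hsum : (∑ i, a i * z i) = δE * a 0 + ∑ j, ζ j * a j.succ := by
      rw [Fin.sum_univ_succ, h0]
      have hm : ∀ j : Fin n, a j.succ * z j.succ = ζ j * a j.succ := fun j => by
        rw [hsucc j]; ring
      rw [Finset.sum_congr rfl fun j _ => hm j]
      ring
    rw [hsum, h0] at hq
    rw [(Finset.sum_congr rfl fun j _ => by rw [hsucc j] :
      (∑ j : Fin n, z j.succ ^ 2) = ∑ j : Fin n, ζ j ^ 2)] at hq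
    rw [dotlem]
    nlinarith [mul_nonneg hlam (sub_nonneg.2 hζ2)]
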